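/- For 2 ≤ σ ≤ 2* = 2d/(d-2), the function φ(x) = (|x|/sinh|x|)^σ on ℝ^d (with φ(0)=1) is continuous, takes values in (0,1], tends to 0 as |x| → ∞, and satisfies 2*(1 - φ(x)) + x·∇φ(x) ≥ 0 for all x ∈ ℝ^d. -/

import Mathlib

open Real MeasureTheory Filter Classical Topology

private lemma mono_help {f f' : ℝ → ℝ} (hd : ∀ y, HasDerivAt f (f' y) y)
    (h0 : ∀ y, 0 < y → 0 ≤ f' y) {x : ℝ} (hx : 0 ≤ x) : f 0 ≤ f x := by
  have hm : MonotoneOn f (Set.Ici (0:ℝ)) := by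
    apply monotoneOn_of_deriv_nonneg (convex_Ici 0)
      (fun y _ => (hd y).continuousAt.continuousWithinAt)
      (fun y _ => (hd y).differentiableAt.differentiableWithinAt)
    intro y hy
    rw [interior_Ici] at hy
    rw [(hd y).deriv]
    exact h0 y hy
  exact hm (Set.self_mem_Ici) hx hx

private lemma aux_cosh (x : ℝ) (hx : 0 ≤ x) : 1 + x^2/2 ≤ Real.cosh x := by
  have hd : ∀ y : ℝ, HasDerivAt (fun y => Real.cosh y - 1 - y^2/2) (Real.sinh y - y) y := by
    intro y
    have h2 : HasDerivAt (fun y : ℝ => y^2/2) y y := by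
      have := (hasDerivAt_pow 2 y).div_const 2
      simpa using this
    have := ((Real.hasDerivAt_cosh y).sub_const 1).sub h2
    exact this
  have := mono_help hd (fun y hy => by
    have := Real.self_le_sinh_iff.mpr hy.le
    linarith) hx
  simp [Real.cosh_zero] at this
  linarith

private lemma aux_sinh (x : ℝ) (hx : 0 ≤ x) : x + x^3/6 ≤ Real.sinh x := by
  have hd : ∀ y : ℝ, HasDerivAt (fun y => Real.sinh y - y - y^3/6) (Real.cosh y - 1 - y^2/2) y := by
    intro y
    have h2 : HasDerivAt (fun y : ℝ => y^3/6) (y^2/2) y := by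
      have := (hasDerivAt_pow 3 y).div_const 6
      norm_num at this
      refine this.congr_deriv ?_
      ring
    have := ((Real.hasDerivAt_sinh y).sub (hasDerivAt_id y)).sub h2
    exact this
  have := mono_help hd (fun y hy => by have := aux_cosh y hy.le; linarith) hx
  simp [Real.sinh_zero] at this
  linarith

private lemma aux_rc (x : ℝ) (hx : 0 ≤ x) : Real.sinh x ≤ x * Real.cosh x := by
  have hd : ∀ y : ℝ, HasDerivAt (fun y => y * Real.cosh y - Real.sinh y) (y * Real.sinh y) y := by
    intro y
    have := ((hasDerivAt_id y).mul (Real.hasDerivAt_cosh y)).sub (Real.hasDerivAt_sinh y)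
    refine this.congr_deriv ?_
    simp only [id_eq]; ring
  have := mono_help hd (fun y hy => mul_nonneg hy.le (Real.sinh_nonneg_iff.mpr hy.le)) hx
  simp at this
  linarith

private lemma poly_key (x s : ℝ) (hx : 0 < x) (hs : x + x^3/6 ≤ s) : x^6 * (s^2+1) ≤ s^6 := by
  have hp0 : (0:ℝ) < x + x^3/6 := by positivity
  have hs0 : 0 < s := lt_of_lt_of_le hp0 hs
  have h1 : x^6 ≤ (x + x^3/6)^4 := by
    nlinarith [sq_nonneg (x^2-1), pow_nonneg hx.le 4, pow_nonneg hx.le 10, pow_nonneg hx.le 12]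
  have hp2 : (x + x^3/6)^2 ≤ s^2 := by nlinarith
  have hp4 : (x + x^3/6)^4 ≤ s^4 := by nlinarith
  have hA : (x + x^3/6)^2*((x + x^3/6)^4 - x^6) ≤ s^2*(s^4 - x^6) :=
    mul_le_mul hp2 (by linarith) (by linarith) (by positivity)
  have hB : x^6 ≤ (x + x^3/6)^2*((x + x^3/6)^4 - x^6) := by
    nlinarith [pow_nonneg hx.le 10, pow_nonneg hx.le 12, pow_nonneg hx.le 14, pow_nonneg hx.le 16, pow_nonneg hx.le 18]
  nlinarith

private lemma aux_key (x : ℝ) (hx : 0 < x) : x^3 * Real.cosh x ≤ (Real.sinh x)^3 := by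
  have hs : x + x^3/6 ≤ Real.sinh x := aux_sinh x hx.le
  have hs0 : 0 < Real.sinh x := Real.sinh_pos_iff.mpr hx
  have hC : 0 < Real.cosh x := Real.cosh_pos x
  have h2 := poly_key x (Real.sinh x) hx hs
  have h3 : (x^3 * Real.cosh x)^2 ≤ ((Real.sinh x)^3)^2 := by
    have he : (x^3 * Real.cosh x)^2 = x^6 * ((Real.sinh x)^2 + 1) := by
      rw [mul_pow, Real.cosh_sq]; ring
    rw [he]
    nlinarith
  nlinarith [mul_pos (pow_pos hx 3) hC, pow_pos hs0 3]

private lemma scalar_ineq (σ c r : ℝ) (hσ : 2 ≤ σ) (hc : σ ≤ c) (hr : 0 < r) :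
    0 ≤ c * (1 - (r / Real.sinh r) ^ σ)
      + (1 * Real.sinh r - r * Real.cosh r) / Real.sinh r ^ 2 * σ * (r / Real.sinh r) ^ (σ - 1) * r := by
  have hS : 0 < Real.sinh r := Real.sinh_pos_iff.mpr hr
  have hC : 0 < Real.cosh r := Real.cosh_pos r
  have hbase : 0 < r / Real.sinh r := div_pos hr hS
  have hb1 : r / Real.sinh r ≤ 1 := (div_le_one hS).mpr (Real.self_le_sinh_iff.mpr hr.le)
  have hP : 0 < (r / Real.sinh r) ^ σ := Real.rpow_pos_of_pos hbase σ
  have hP1 : (r / Real.sinh r) ^ σ ≤ 1 := Real.rpow_le_one hbase.le hb1 (by linarith)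
  have hPQ : (r / Real.sinh r) ^ σ ≤ r ^ 2 / Real.sinh r ^ 2 := by
    calc (r / Real.sinh r) ^ σ ≤ (r / Real.sinh r) ^ (2:ℝ) :=
          Real.rpow_le_rpow_of_exponent_ge hbase hb1 hσ
      _ = (r / Real.sinh r) ^ (2:ℕ) := Real.rpow_two _
      _ = r ^ 2 / Real.sinh r ^ 2 := div_pow r _ 2
  have hkey : r ^ 3 * Real.cosh r ≤ Real.sinh r ^ 3 := aux_key r hr
  have hrc : Real.sinh r ≤ r * Real.cosh r := aux_rc r hr.le
  -- abbreviate
  generalize hPd : (r / Real.sinh r) ^ σ = P at *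
  generalize hSd : Real.sinh r = S at *
  generalize hCd : Real.cosh r = C at *
  have hPrC : P * (r * C) ≤ S := by
    have h6 : P * S ^ 2 ≤ r ^ 2 := (le_div_iff₀ (by positivity)).mp hPQ
    have h5 : P * (r * C) * S ^ 2 ≤ S ^ 3 := by
      nlinarith [mul_nonneg (mul_nonneg hr.le hC.le) (sq_nonneg S)]
    exact le_of_mul_le_mul_right (by nlinarith) (pow_pos hS 2)
  have hpow : (r / S) ^ (σ - 1) = P * S / r := by
    rw [Real.rpow_sub_one (by positivity), hPd, div_div_eq_mul_div]
  have hterm : (1 * S - r * C) / S ^ 2 * σ * (r / S) ^ (σ - 1) * r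
      = σ * P * (S - r * C) / S := by
    rw [hpow]
    field_simp
  rw [hterm]
  have e1 : σ * ((1 - P) * S) ≤ c * ((1 - P) * S) :=
    mul_le_mul_of_nonneg_right hc (mul_nonneg (by linarith) hS.le)
  have e2 : 0 ≤ σ * (S - P * (r * C)) := mul_nonneg (by linarith) (by linarith)
  have h6 : 0 ≤ c * (1 - P) * S + σ * P * (S - r * C) := by nlinarith [e1, e2]
  have h7 : c * (1 - P) + σ * P * (S - r * C) / S
      = (c * (1 - P) * S + σ * P * (S - r * C)) / S := by
    field_simp
  rw [h7]
  exact div_nonneg h6 hS.le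

/-- for `2 ≤ σ ≤ 2* = 2d/(d-2)`, the function
`φ(x) = (|x|/sinh|x|)^σ` (with `φ(0) = 1`) is continuous, takes values in `(0,1]`,
vanishes at infinity, and satisfies `2*(1 - φ(x)) + x·∇φ(x) ≥ 0` for all `x`. -/
theorem stmt_14 (d : ℕ) (hd : 3 ≤ d) (hd' : d ≤ 5)
    (σ : ℝ) (hσ : 2 ≤ σ) (hσ' : σ ≤ (2 * (d : ℝ)) / ((d : ℝ) - 2))
    (φ : EuclideanSpace ℝ (Fin d) → ℝ)
    (hφdef : ∀ x, φ x = if x = (0 : EuclideanSpace ℝ (Fin d)) then 1 else (‖x‖ / Real.sinh ‖x‖) ^ σ) :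
    Continuous φ ∧
    (∀ x, 0 < φ x ∧ φ x ≤ 1) ∧
    Tendsto φ (cocompact (EuclideanSpace ℝ (Fin d))) (nhds 0) ∧
    (∀ x, 0 ≤ ((2 * (d : ℝ)) / ((d : ℝ) - 2)) * (1 - φ x)
        + (inner ℝ x (gradient φ x) : ℝ)) := by
  refine ⟨?_, ?_, ?_, ?_⟩
  · -- continuity
    rw [continuous_iff_continuousAt]
    intro x
    by_cases hx : x = (0 : EuclideanSpace ℝ (Fin d))
    · -- continuity at 0
      subst hx
      have h1 : Tendsto (fun r : ℝ => Real.sinh r / r) (nhdsWithin 0 {(0:ℝ)}ᶜ) (nhds 1) := by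
        have := hasDerivAt_iff_tendsto_slope.mp (Real.hasDerivAt_sinh 0)
        simp only [Real.cosh_zero] at this
        refine this.congr' ?_
        filter_upwards [self_mem_nhdsWithin] with r hr
        simp [slope_def_field, Real.sinh_zero]
      have h2 : Tendsto (fun r : ℝ => r / Real.sinh r) (nhdsWithin 0 {(0:ℝ)}ᶜ) (nhds 1) := by
        have := (h1.inv₀ one_ne_zero)
        simp only [inv_one] at this
        refine this.congr' ?_
        filter_upwards with r
        rw [inv_div]
      have h3 : Tendsto (fun r : ℝ => (r / Real.sinh r) ^ σ) (nhdsWithin 0 {(0:ℝ)}ᶜ) (nhds 1) := by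
        have hc : ContinuousAt (fun t : ℝ => t ^ σ) 1 :=
          Real.continuousAt_rpow_const 1 σ (Or.inl one_ne_zero)
        have := hc.tendsto.comp h2
        simpa [Real.one_rpow, Function.comp_def] using this
      have hnorm : Tendsto (fun y : EuclideanSpace ℝ (Fin d) => ‖y‖)
          (nhdsWithin 0 {(0:EuclideanSpace ℝ (Fin d))}ᶜ) (nhdsWithin 0 {(0:ℝ)}ᶜ) := by
        rw [tendsto_nhdsWithin_iff]
        constructor
        · exact (continuous_norm.tendsto 0).mono_left nhdsWithin_le_nhds |>.congr (fun y => rfl) |>.mono_right (by simp)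
        · filter_upwards [self_mem_nhdsWithin] with y hy
          simpa using norm_ne_zero_iff.mpr hy
      have h4 : Tendsto φ (nhdsWithin 0 {(0:EuclideanSpace ℝ (Fin d))}ᶜ) (nhds 1) := by
        refine (h3.comp hnorm).congr' ?_
        filter_upwards [self_mem_nhdsWithin] with y hy
        simp only [Function.comp_apply]
        rw [hφdef, if_neg (show y ≠ 0 by simpa using hy)]
      have hφ0 : φ 0 = 1 := by simp [hφdef]
      have h5 : Tendsto φ (pure (0:EuclideanSpace ℝ (Fin d))) (nhds 1) := by
        rw [← hφ0]; exact tendsto_pure_nhds φ 0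
      unfold ContinuousAt
      rw [hφdef, if_pos rfl, ← nhdsNE_sup_pure (0 : EuclideanSpace ℝ (Fin d)),
        tendsto_sup]
      exact ⟨h4, h5⟩
    · -- continuity away from 0
      have hcont : ContinuousAt (fun y : EuclideanSpace ℝ (Fin d) => (‖y‖ / Real.sinh ‖y‖) ^ σ) x := by
        have hr : 0 < ‖x‖ := norm_pos_iff.mpr hx
        have hb : 0 < ‖x‖ / Real.sinh ‖x‖ := div_pos hr (Real.sinh_pos_iff.mpr hr)
        have h1 : ContinuousAt (fun y : EuclideanSpace ℝ (Fin d) => ‖y‖ / Real.sinh ‖y‖) x :=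
          (continuous_norm.continuousAt).div
            (Real.continuous_sinh.comp continuous_norm).continuousAt
            (Real.sinh_pos_iff.mpr hr).ne'
        exact h1.rpow_const (Or.inl hb.ne')
      refine hcont.congr ?_
      filter_upwards [isOpen_compl_singleton.mem_nhds hx] with y hy
      rw [hφdef, if_neg (show y ≠ 0 by simpa using hy)]
  · -- bounds
    intro x
    by_cases hx : x = 0
    · simp [hφdef, hx]
    · rw [hφdef, if_neg hx]
      have hr : 0 < ‖x‖ := norm_pos_iff.mpr hx
      constructor
      · exact Real.rpow_pos_of_pos (div_pos hr (Real.sinh_pos_iff.mpr hr)) σ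
      · exact Real.rpow_le_one (div_pos hr (Real.sinh_pos_iff.mpr hr)).le
          ((div_le_one (Real.sinh_pos_iff.mpr hr)).mpr (Real.self_le_sinh_iff.mpr hr.le))
          (by linarith)
  · -- vanishing
    have hnorm : Tendsto (fun y : EuclideanSpace ℝ (Fin d) => ‖y‖) (cocompact _) atTop :=
      tendsto_norm_cocompact_atTop
    have hbound : Tendsto (fun y : EuclideanSpace ℝ (Fin d) => 6 / ‖y‖ ^ 2) (cocompact _) (nhds 0) := by
      apply Tendsto.div_atTop (tendsto_const_nhds)
      exact (tendsto_pow_atTop two_ne_zero).comp hnorm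
    apply squeeze_zero' ?_ ?_ hbound
    · filter_upwards [hnorm.eventually_ge_atTop 1] with y hy
      have hr : 0 < ‖y‖ := lt_of_lt_of_le one_pos hy
      rw [hφdef, if_neg (norm_pos_iff.mp hr)]
      positivity
    · filter_upwards [hnorm.eventually_ge_atTop 1] with y hy
      have hr : 0 < ‖y‖ := lt_of_lt_of_le one_pos hy
      have hS : 0 < Real.sinh ‖y‖ := Real.sinh_pos_iff.mpr hr
      have hb0 : 0 < ‖y‖ / Real.sinh ‖y‖ := div_pos hr hS
      have hb1 : ‖y‖ / Real.sinh ‖y‖ ≤ 1 :=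
        (div_le_one hS).mpr (Real.self_le_sinh_iff.mpr hr.le)
      rw [hφdef, if_neg (norm_pos_iff.mp hr)]
      calc (‖y‖ / Real.sinh ‖y‖) ^ σ ≤ (‖y‖ / Real.sinh ‖y‖) ^ (1:ℝ) :=
            Real.rpow_le_rpow_of_exponent_ge hb0 hb1 (by linarith)
        _ = ‖y‖ / Real.sinh ‖y‖ := Real.rpow_one _
        _ ≤ 6 / ‖y‖ ^ 2 := by
            rw [div_le_div_iff₀ hS (by positivity)]
            have := aux_sinh ‖y‖ hr.le
            nlinarith
  · -- gradient inequality
    intro x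
    by_cases hx : x = (0 : EuclideanSpace ℝ (Fin d))
    · subst hx
      simp [hφdef]
    · have hr : 0 < ‖x‖ := norm_pos_iff.mpr hx
      have hS : 0 < Real.sinh ‖x‖ := Real.sinh_pos_iff.mpr hr
      have hbase : 0 < ‖x‖ / Real.sinh ‖x‖ := div_pos hr hS
      have hu : HasDerivAt (fun t => t / Real.sinh t)
          ((1 * Real.sinh ‖x‖ - ‖x‖ * Real.cosh ‖x‖) / Real.sinh ‖x‖ ^ 2) ‖x‖ :=
        (hasDerivAt_id ‖x‖).div (Real.hasDerivAt_sinh ‖x‖) hS.ne'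
      have hg : HasDerivAt (fun t => (t / Real.sinh t) ^ σ)
          ((1 * Real.sinh ‖x‖ - ‖x‖ * Real.cosh ‖x‖) / Real.sinh ‖x‖ ^ 2 * σ
            * (‖x‖ / Real.sinh ‖x‖) ^ (σ - 1)) ‖x‖ :=
        hu.rpow_const (Or.inl hbase.ne')
      have hip : (0:ℝ) < (inner ℝ x x : ℝ) := by
        rw [real_inner_self_eq_norm_sq]; exact pow_pos hr 2
      have hN0 : HasFDerivAt (fun y : EuclideanSpace ℝ (Fin d) => (inner ℝ y y : ℝ))
          ((fderivInnerCLM ℝ (x, x)).comp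
            ((ContinuousLinearMap.id ℝ _).prod (ContinuousLinearMap.id ℝ _))) x := by
        have := (hasFDerivAt_id x).inner ℝ (hasFDerivAt_id x)
        simpa using this
      have hsqrt : HasDerivAt Real.sqrt (1 / (2 * Real.sqrt (inner ℝ x x : ℝ))) (inner ℝ x x : ℝ) :=
        Real.hasDerivAt_sqrt hip.ne'
      have hN : HasFDerivAt (fun y : EuclideanSpace ℝ (Fin d) => Real.sqrt (inner ℝ y y : ℝ))
          ((1 / (2 * Real.sqrt (inner ℝ x x : ℝ))) •
            ((fderivInnerCLM ℝ (x, x)).comp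
              ((ContinuousLinearMap.id ℝ _).prod (ContinuousLinearMap.id ℝ _)))) x :=
        HasDerivAt.comp_hasFDerivAt
          (f := fun y : EuclideanSpace ℝ (Fin d) => (inner ℝ y y : ℝ)) x hsqrt hN0
      have hNeq : (fun y : EuclideanSpace ℝ (Fin d) => Real.sqrt (inner ℝ y y : ℝ))
          = fun y => ‖y‖ := by
        funext y
        rw [real_inner_self_eq_norm_mul_norm, Real.sqrt_mul_self (norm_nonneg y)]
      rw [hNeq] at hN
      have hφN : HasFDerivAt (fun y : EuclideanSpace ℝ (Fin d) => (‖y‖ / Real.sinh ‖y‖) ^ σ)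
          (((1 * Real.sinh ‖x‖ - ‖x‖ * Real.cosh ‖x‖) / Real.sinh ‖x‖ ^ 2 * σ
              * (‖x‖ / Real.sinh ‖x‖) ^ (σ - 1)) •
            ((1 / (2 * Real.sqrt (inner ℝ x x : ℝ))) •
              ((fderivInnerCLM ℝ (x, x)).comp
                ((ContinuousLinearMap.id ℝ _).prod (ContinuousLinearMap.id ℝ _))))) x :=
        hg.comp_hasFDerivAt x hN
      have heq : φ =ᶠ[nhds x] fun y : EuclideanSpace ℝ (Fin d) => (‖y‖ / Real.sinh ‖y‖) ^ σ := by
        filter_upwards [isOpen_compl_singleton.mem_nhds hx] with y hy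
        rw [hφdef, if_neg (show y ≠ 0 by simpa using hy)]
      have hφx := hφN.congr_of_eventuallyEq heq
      have hgrad := hφx.hasGradientAt.gradient
      have hval : (inner ℝ x (gradient φ x) : ℝ)
          = (1 * Real.sinh ‖x‖ - ‖x‖ * Real.cosh ‖x‖) / Real.sinh ‖x‖ ^ 2 * σ
              * (‖x‖ / Real.sinh ‖x‖) ^ (σ - 1) * ‖x‖ := by
        rw [real_inner_comm, hgrad, InnerProductSpace.toDual_symm_apply]
        simp only [ContinuousLinearMap.smul_apply, ContinuousLinearMap.coe_comp',
          Function.comp_apply, ContinuousLinearMap.prod_apply, ContinuousLinearMap.coe_id', id,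
          fderivInnerCLM_apply, smul_eq_mul]
        rw [real_inner_self_eq_norm_mul_norm, Real.sqrt_mul_self (norm_nonneg x)]
        have hne : ‖x‖ ≠ 0 := hr.ne'
        field_simp
        ring
      rw [hval, hφdef, if_neg hx]
      exact scalar_ineq σ _ ‖x‖ hσ hσ' hr
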